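/- For every real t with 0 < t < 1 and every nonnegative integer n, ∑_{k≥0} C(n-k,k) t^k (1-t)^{n-2k} = (1 - (-t)^{n+1})/(1 + t), where the sum is over k with 2k ≤ n. -/

import Mathlib

open Finset

/-- Fibonacci-style recurrence for the diagonal Bernstein sums. -/
private theorem bern_rec (t : ℝ) (n : ℕ) :
    ∑ k ∈ range (n + 3), ((n + 2 - k).choose k : ℝ) * t ^ k * (1 - t) ^ (n + 2 - 2 * k)
      = (1 - t) * ∑ k ∈ range (n + 2), ((n + 1 - k).choose k : ℝ) * t ^ k * (1 - t) ^ (n + 1 - 2 * k)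
        + t * ∑ k ∈ range (n + 1), ((n - k).choose k : ℝ) * t ^ k * (1 - t) ^ (n - 2 * k) := by
  rw [Finset.sum_range_succ' (fun k => ((n + 2 - k).choose k : ℝ) * t ^ k * (1 - t) ^ (n + 2 - 2 * k))]
  have hsplit : ∀ k ∈ range (n + 2),
      ((n + 2 - (k + 1)).choose (k + 1) : ℝ) * t ^ (k + 1) * (1 - t) ^ (n + 2 - 2 * (k + 1))
        = ((n - k).choose k : ℝ) * t ^ (k + 1) * (1 - t) ^ (n - 2 * k)
          + ((n - k).choose (k + 1) : ℝ) * t ^ (k + 1) * (1 - t) ^ (n - 2 * k) := by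
    intro k hk
    have h1 : n + 2 - (k + 1) = n + 1 - k := by omega
    have h2 : n + 2 - 2 * (k + 1) = n - 2 * k := by omega
    rw [h1, h2]
    rcases le_or_gt k n with h | h
    · have h3 : n + 1 - k = (n - k) + 1 := by omega
      rw [h3, Nat.choose_succ_succ]
      push_cast
      ring
    · have hk' : k = n + 1 := by
        simp only [mem_range] at hk; omega
      subst hk'
      have e1 : n + 1 - (n + 1) = 0 := by omega
      have e2 : n - (n + 1) = 0 := by omega
      rw [e1, e2]
      simp [Nat.choose_eq_zero_of_lt]
  rw [Finset.sum_congr rfl hsplit, Finset.sum_add_distrib]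
  -- First summand: drop zero top term, equals t * (sum for n)
  have hA : ∑ k ∈ range (n + 2), ((n - k).choose k : ℝ) * t ^ (k + 1) * (1 - t) ^ (n - 2 * k)
      = t * ∑ k ∈ range (n + 1), ((n - k).choose k : ℝ) * t ^ k * (1 - t) ^ (n - 2 * k) := by
    rw [Finset.sum_range_succ]
    have e2 : n - (n + 1) = 0 := by omega
    rw [e2, Nat.choose_eq_zero_of_lt (by omega)]
    rw [Finset.mul_sum]
    simp only [Nat.cast_zero, zero_mul, add_zero]
    exact Finset.sum_congr rfl fun k _ => by ring
  -- Second summand: drop zero top term, relate to (1-t) * (sum for n+1) minus its k=0 term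
  have hB : ∑ k ∈ range (n + 2), ((n - k).choose (k + 1) : ℝ) * t ^ (k + 1) * (1 - t) ^ (n - 2 * k)
        + (1 - t) ^ (n + 2)
      = (1 - t) * ∑ k ∈ range (n + 2), ((n + 1 - k).choose k : ℝ) * t ^ k * (1 - t) ^ (n + 1 - 2 * k) := by
    rw [Finset.sum_range_succ' (fun k => ((n + 1 - k).choose k : ℝ) * t ^ k * (1 - t) ^ (n + 1 - 2 * k))]
    rw [Finset.sum_range_succ]
    have e2 : n - (n + 1) = 0 := by omega
    rw [e2, Nat.choose_eq_zero_of_lt (by omega)]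
    simp only [Nat.cast_zero, zero_mul, add_zero, Nat.sub_zero, Nat.choose_zero_right,
      Nat.cast_one, pow_zero, one_mul, mul_one, Nat.mul_zero]
    rw [mul_add, Finset.mul_sum]
    have hterm : ∀ k ∈ range (n + 1),
        (1 - t) * (((n + 1 - (k + 1)).choose (k + 1) : ℝ) * t ^ (k + 1) * (1 - t) ^ (n + 1 - 2 * (k + 1)))
          = ((n - k).choose (k + 1) : ℝ) * t ^ (k + 1) * (1 - t) ^ (n - 2 * k) := by
      intro k hk
      have h1 : n + 1 - (k + 1) = n - k := by omega
      rw [h1]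
      rcases le_or_gt (2 * k + 1) n with h | h
      · have h2 : n - 2 * k = (n + 1 - 2 * (k + 1)) + 1 := by omega
        rw [h2, pow_succ]
        ring
      · have hz : n - k < k + 1 := by omega
        rw [Nat.choose_eq_zero_of_lt hz]
        push_cast
        ring
    rw [Finset.sum_congr rfl hterm]
    ring
  rw [← hB, ← hA]
  have : (↑((n + 2 - 0).choose 0) : ℝ) * t ^ 0 * (1 - t) ^ (n + 2 - 2 * 0) = (1 - t) ^ (n + 2) := by
    simp
  rw [this]
  ring

private theorem bern_full (t : ℝ) (ht : (1 : ℝ) + t ≠ 0) : ∀ n : ℕ,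
    ∑ k ∈ range (n + 1), ((n - k).choose k : ℝ) * t ^ k * (1 - t) ^ (n - 2 * k)
      = (1 - (-t) ^ (n + 1)) / (1 + t) := by
  intro n
  induction n using Nat.twoStepInduction with
  | zero =>
    rw [Finset.sum_range_one]
    norm_num
    field_simp
  | one =>
    rw [Finset.sum_range_succ, Finset.sum_range_one]
    norm_num
    field_simp
    ring
  | more n ih1 ih2 =>
    rw [bern_rec t n, ih1, ih2]
    field_simp
    ring

/-- For `0 < t < 1` and every `n`,
`∑_{k, 2k ≤ n} C(n-k,k) t^k (1-t)^{n-2k} = (1 - (-t)^{n+1})/(1 + t)`. -/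
theorem bernstein_short_diagonal_sum (t : ℝ) (h0 : 0 < t) (h1 : t < 1) (n : ℕ) :
    ∑ k ∈ Finset.range (n / 2 + 1), ((n - k).choose k : ℝ) * t ^ k * (1 - t) ^ (n - 2 * k)
      = (1 - (-t) ^ (n + 1)) / (1 + t) := by
  have ht : (1 : ℝ) + t ≠ 0 := by positivity
  rw [← bern_full t ht n]
  apply Finset.sum_subset
  · intro k hk
    simp only [mem_range] at hk ⊢
    omega
  · intro k hk hk'
    simp only [mem_range] at hk hk'
    have : n - k < k := by omega
    rw [Nat.choose_eq_zero_of_lt this]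
    push_cast
    ring
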